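/- Let G be a connected Hausdorff topological group with finite center Z(G) such that every normal subgroup of G is either contained in Z(G) or equal to G. Let L₀ ⊆ G × G be a subgroup which contains the diagonal Δ(G) = {(g, g) : g ∈ G} and which is connected as a topological subspace of G × G. Then either L₀ = Δ(G) or L₀ = G × G. -/

import Mathlib

/-- The diagonal subgroup `Δ(G) = {(g, g) : g ∈ G}` of `G × G`. -/
def diagonalSubgroup (G : Type) [Group G] : Subgroup (G × G) :=
  (MonoidHom.prod (MonoidHom.id G) (MonoidHom.id G)).range

/-- A finite preconnected set in a T1 space is a subsingleton. -/
lemma finite_preconnected_subsingleton {X : Type*} [TopologicalSpace X] [T1Space X]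
    {S : Set X} (hS : IsPreconnected S) (hfin : S.Finite) : S.Subsingleton := by
  intro x hx y hy
  by_contra hxy
  have h1 : IsOpen ((S \ {x})ᶜ) := (hfin.subset Set.diff_subset).isClosed.isOpen_compl
  have h2 : IsOpen (({x} : Set X)ᶜ) := isClosed_singleton.isOpen_compl
  obtain ⟨z, hzS, hz1, hz2⟩ := hS _ _ h1 h2
    (by
      intro s hs
      by_cases h : s = x
      · exact Or.inl (by simp [h])
      · exact Or.inr h)
    ⟨x, hx, by simp⟩
    ⟨y, hy, fun h => hxy (Set.mem_singleton_iff.mp h).symm⟩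
  simp only [Set.mem_compl_iff, Set.mem_diff, Set.mem_singleton_iff, not_and, not_not] at hz1 hz2
  exact hz2 (hz1 hzS)

theorem diagonal_or_full {G : Type} [Group G] [TopologicalSpace G] [IsTopologicalGroup G]
    [ConnectedSpace G] [T2Space G] [Finite (Subgroup.center G)]
    (hsimple : ∀ N : Subgroup G, N.Normal → N ≤ Subgroup.center G ∨ N = ⊤)
    (L₀ : Subgroup (G × G))
    (hdiag : diagonalSubgroup G ≤ L₀)
    (hconn : IsConnected (L₀ : Set (G × G))) :
    L₀ = diagonalSubgroup G ∨ L₀ = ⊤ := by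
  have hdiagmem : ∀ g : G, (g, g) ∈ L₀ := fun g => hdiag ⟨g, rfl⟩
  -- The subgroup N = {g : (g,1) ∈ L₀}
  set N : Subgroup G := L₀.comap (MonoidHom.inl G G) with hN
  have hNmem : ∀ g : G, g ∈ N ↔ (g, 1) ∈ L₀ := fun g => Iff.rfl
  have hNnormal : N.Normal := by
    constructor
    intro n hn g
    have h1 : ((g, g) : G × G) * (n, 1) * (g⁻¹, g⁻¹) ∈ L₀ :=
      L₀.mul_mem (L₀.mul_mem (hdiagmem g) hn) (L₀.inv_mem (hdiagmem g))
    simpa [hNmem] using h1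
  rcases hsimple N hNnormal with hcen | htop
  · -- N central: L₀ = Δ
    left
    apply le_antisymm _ hdiag
    -- the map (a,b) ↦ a * b⁻¹ sends L₀ into N, image is connected finite hence {1}
    have hcont : Continuous fun p : G × G => p.1 * p.2⁻¹ :=
      continuous_fst.mul continuous_snd.inv
    have himg : IsConnected ((fun p : G × G => p.1 * p.2⁻¹) '' (L₀ : Set (G × G))) :=
      hconn.image _ hcont.continuousOn
    have hsub : ((fun p : G × G => p.1 * p.2⁻¹) '' (L₀ : Set (G × G))) ⊆ (N : Set G) := by
      rintro _ ⟨⟨a, b⟩, hab, rfl⟩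
      have : ((a, b) : G × G) * (b, b)⁻¹ ∈ L₀ := L₀.mul_mem hab (L₀.inv_mem (hdiagmem b))
      simpa [hNmem] using this
    have hfin : ((fun p : G × G => p.1 * p.2⁻¹) '' (L₀ : Set (G × G))).Finite := by
      apply Set.Finite.subset _ (hsub.trans hcen)
      exact (Subgroup.center G : Set G).toFinite
    have hss := finite_preconnected_subsingleton himg.isPreconnected hfin
    intro ⟨a, b⟩ hab
    have h1 : (1 : G) ∈ (fun p : G × G => p.1 * p.2⁻¹) '' (L₀ : Set (G × G)) :=
      ⟨(1, 1), L₀.one_mem, by simp⟩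
    have h2 : a * b⁻¹ ∈ (fun p : G × G => p.1 * p.2⁻¹) '' (L₀ : Set (G × G)) :=
      ⟨(a, b), hab, rfl⟩
    have : a * b⁻¹ = 1 := hss h2 h1
    have hab' : a = b := mul_inv_eq_one.mp this
    exact ⟨a, by simp [hab', MonoidHom.prod]⟩
  · -- N = ⊤: L₀ = ⊤
    right
    ext ⟨a, b⟩
    simp only [Subgroup.mem_top, iff_true]
    have h1 : (a * b⁻¹, (1 : G)) ∈ L₀ := by
      have : a * b⁻¹ ∈ N := htop ▸ Subgroup.mem_top _
      exact this
    have h2 := L₀.mul_mem h1 (hdiagmem b)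
    simpa using h2
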